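/- Let α > 0, n ∈ ℕ, q_0 = 1, 0 < q_i < 1 for i = 1, ..., n, and a_i ≥ 0 for i = 0, 1, ..., n. Then for all x with 0 ≤ x < ∞, E_α(a_0 x^α) ≤ R_α(ā; q̄; x) ≤ E_α((Σ_{i=0}^n a_i) x^α), where E_α(x) = Σ_{m=0}^∞ x^m / Γ(αm + 1) is the Mittag-Leffler function of order α. -/

import Mathlib

open Real Finset

/-- Key pointwise bound: for `1 ≤ α m`, `y^m / Γ(αm+1)` is bounded by a geometric term. -/
lemma ml_term_bound (α : ℝ) (hα : 0 < α) (y : ℝ) (hy : 0 ≤ y) (m : ℕ) (hm : (1:ℝ) ≤ α * m) :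
    y ^ m / Real.Gamma (α * m + 1) ≤
      (max ((2*(y+1)) ^ (1/α)) 1 * Real.exp (max ((2*(y+1)) ^ (1/α)) 1)) * (1/2) ^ m := by
  set S : ℝ := max ((2*(y+1)) ^ (1/α)) 1 with hSdef
  have hS1 : (1:ℝ) ≤ S := le_max_right _ _
  have hS0 : (0:ℝ) ≤ S := by linarith
  have hR0 : (0:ℝ) < 2*(y+1) := by linarith
  have hRS : 2*(y+1) ≤ S ^ α := by
    have h1 : ((2*(y+1)) ^ (1/α)) ^ α ≤ S ^ α :=
      Real.rpow_le_rpow (Real.rpow_nonneg hR0.le _) (le_max_left _ _) hα.le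
    rwa [← Real.rpow_mul hR0.le, one_div, inv_mul_cancel₀ hα.ne', Real.rpow_one] at h1
  set k : ℕ := ⌊α * m⌋₊ with hkdef
  have hk1 : 1 ≤ k := Nat.le_floor (by exact_mod_cast hm)
  have hfl : (k : ℝ) ≤ α * m := Nat.floor_le (by linarith)
  have hlt : α * m < (k : ℝ) + 1 := Nat.lt_floor_add_one _
  have hΓpos : 0 < Real.Gamma (α * m + 1) := Real.Gamma_pos_of_pos (by linarith)
  have hfact : (k.factorial : ℝ) ≤ Real.Gamma (α * m + 1) := by
    have h2 : ((k : ℝ) + 1) ∈ Set.Ici (2:ℝ) := by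
      have : (1:ℝ) ≤ (k:ℝ) := by exact_mod_cast hk1
      simp only [Set.mem_Ici]; linarith
    have h3 : (α * m + 1) ∈ Set.Ici (2:ℝ) := by simp only [Set.mem_Ici]; linarith
    have := Real.Gamma_strictMonoOn_Ici.monotoneOn h2 h3 (by linarith)
    rwa [Real.Gamma_nat_eq_factorial] at this
  have hSk : S ^ k ≤ Real.exp S * k.factorial := by
    have := Real.pow_div_factorial_le_exp (x := S) hS0 k
    have hfpos : (0:ℝ) < k.factorial := by exact_mod_cast k.factorial_pos
    rw [div_le_iff₀ hfpos] at this
    linarith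
  have hchain : (2:ℝ) ^ m * y ^ m ≤ S * Real.exp S * Real.Gamma (α * m + 1) := by
    calc (2:ℝ) ^ m * y ^ m = (2 * y) ^ m := (mul_pow _ _ _).symm
      _ ≤ (2 * (y + 1)) ^ m := pow_le_pow_left₀ (by linarith) (by linarith) m
      _ ≤ (S ^ α) ^ m := pow_le_pow_left₀ hR0.le hRS m
      _ = S ^ (α * m) := by
          rw [Real.rpow_mul hS0, Real.rpow_natCast]
      _ ≤ S ^ ((k : ℝ) + 1) := Real.rpow_le_rpow_of_exponent_le hS1 hlt.le
      _ = S * S ^ k := by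
          rw [Real.rpow_add (by linarith), Real.rpow_one, Real.rpow_natCast, mul_comm]
      _ ≤ S * (Real.exp S * k.factorial) := mul_le_mul_of_nonneg_left hSk hS0
      _ ≤ S * Real.exp S * Real.Gamma (α * m + 1) := by
          rw [mul_assoc]
          exact mul_le_mul_of_nonneg_left
            (mul_le_mul_of_nonneg_left hfact (Real.exp_pos S).le) hS0
  rw [div_le_iff₀ hΓpos]
  have h2 : ((1:ℝ)/2) ^ m * ((2:ℝ) ^ m * y ^ m) = y ^ m := by
    rw [← mul_assoc, ← mul_pow]; norm_num
  calc y ^ m = (1/2:ℝ) ^ m * ((2:ℝ) ^ m * y ^ m) := h2.symm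
    _ ≤ (1/2:ℝ) ^ m * (S * Real.exp S * Real.Gamma (α * m + 1)) :=
        mul_le_mul_of_nonneg_left hchain (by positivity)
    _ = S * Real.exp S * (1/2:ℝ) ^ m * Real.Gamma (α * m + 1) := by ring

lemma ml_summable (α : ℝ) (hα : 0 < α) (y : ℝ) (hy : 0 ≤ y) :
    Summable (fun m : ℕ => y ^ m / Real.Gamma (α * m + 1)) := by
  obtain ⟨M, hMα⟩ : ∃ M : ℕ, (1:ℝ) ≤ α * M := by
    refine ⟨⌈1/α⌉₊ + 1, ?_⟩
    have h1 : (1/α : ℝ) ≤ ⌈1/α⌉₊ := Nat.le_ceil _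
    have h2 : ((⌈1/α⌉₊ : ℝ)) ≤ ((⌈1/α⌉₊ + 1 : ℕ) : ℝ) := by push_cast; linarith
    have := mul_le_mul_of_nonneg_left (h1.trans h2) hα.le
    rwa [mul_one_div, div_self hα.ne'] at this
  set C : ℝ := max ((2*(y+1)) ^ (1/α)) 1 * Real.exp (max ((2*(y+1)) ^ (1/α)) 1) with hCdef
  rw [← summable_nat_add_iff M]
  apply Summable.of_nonneg_of_le (f := fun m => C * (1/2:ℝ) ^ m)
  · intro m
    have : (0:ℝ) < α * (m + M : ℕ) + 1 := by
      have := mul_nonneg hα.le (Nat.cast_nonneg (m + M))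
      linarith
    exact div_nonneg (pow_nonneg hy _) (Real.Gamma_pos_of_pos this).le
  · intro m
    have hmm : (1:ℝ) ≤ α * ((m + M : ℕ) : ℝ) := by
      have h3 : ((M:ℕ):ℝ) ≤ ((m + M : ℕ) : ℝ) := by exact_mod_cast Nat.le_add_left M m
      calc (1:ℝ) ≤ α * M := hMα
        _ ≤ α * ((m + M : ℕ) : ℝ) := mul_le_mul_of_nonneg_left h3 hα.le
    have hb := ml_term_bound α hα y hy (m + M) hmm
    refine hb.trans ?_
    have h4 : ((1:ℝ)/2) ^ (m + M) ≤ (1/2:ℝ) ^ m :=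
      pow_le_pow_of_le_one (by norm_num) (by norm_num) (Nat.le_add_right m M)
    have hC0 : 0 ≤ C := by
      have : (0:ℝ) ≤ max ((2*(y+1)) ^ (1/α)) 1 := le_trans zero_le_one (le_max_right _ _)
      exact mul_nonneg this (Real.exp_pos _).le
    exact mul_le_mul_of_nonneg_left h4 hC0
  · exact (summable_geometric_of_lt_one (by norm_num) (by norm_num)).mul_left C

/-- Mittag-Leffler bounds: for nonnegative coefficients `a_i ≥ 0` and `0 ≤ x < ∞`,
`E_α(a_0 x^α) ≤ R_α(ā; q̄; x) ≤ E_α((Σ_{i=0}^n a_i) x^α)`, where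
`E_α(x) = Σ_{m=0}^∞ x^m / Γ(αm+1)`. -/
theorem statement14 (α : ℝ) (hα : 0 < α) (n : ℕ) (a q : Fin (n + 1) → ℝ)
    (hq0 : q 0 = 1) (hq : ∀ i : Fin (n + 1), i ≠ 0 → 0 < q i ∧ q i < 1)
    (ha : ∀ i : Fin (n + 1), 0 ≤ a i)
    (x : ℝ) (hx : 0 ≤ x) :
    (∑' m : ℕ, (a 0 * x ^ α) ^ m / Real.Gamma (α * m + 1)) ≤
        (∑' m : ℕ, x ^ (α * m) / Real.Gamma (α * m + 1) *
          ∏ j ∈ Finset.range m, ∑ i, a i * q i ^ (α * j)) ∧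
      (∑' m : ℕ, x ^ (α * m) / Real.Gamma (α * m + 1) *
          ∏ j ∈ Finset.range m, ∑ i, a i * q i ^ (α * j)) ≤
        ∑' m : ℕ, ((∑ i, a i) * x ^ α) ^ m / Real.Gamma (α * m + 1) := by
  have hxα : (0:ℝ) ≤ x ^ α := Real.rpow_nonneg hx _
  have hsa : (0:ℝ) ≤ ∑ i, a i := Finset.sum_nonneg fun i _ => ha i
  have hΓpos : ∀ m : ℕ, 0 < Real.Gamma (α * m + 1) := fun m => by
    have := mul_nonneg hα.le (Nat.cast_nonneg m)
    exact Real.Gamma_pos_of_pos (by linarith)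
  have hxm : ∀ m : ℕ, x ^ (α * (m:ℝ)) = (x ^ α) ^ m := fun m => by
    rw [Real.rpow_mul hx, Real.rpow_natCast]
  have hqn : ∀ i, 0 ≤ q i := fun i => by
    by_cases h : i = 0
    · rw [h, hq0]; norm_num
    · exact (hq i h).1.le
  have hq1 : ∀ i, q i ≤ 1 := fun i => by
    by_cases h : i = 0
    · rw [h, hq0]
    · exact (hq i h).2.le
  have hfac_nonneg : ∀ j : ℕ, (0:ℝ) ≤ ∑ i, a i * q i ^ (α * j) := fun j =>
    Finset.sum_nonneg fun i _ => mul_nonneg (ha i) (Real.rpow_nonneg (hqn i) _)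
  have hlow_fac : ∀ j : ℕ, a 0 ≤ ∑ i, a i * q i ^ (α * j) := fun j => by
    have h0 : a 0 * q 0 ^ (α * (j:ℝ)) = a 0 := by
      rw [hq0, Real.one_rpow, mul_one]
    calc a 0 = a 0 * q 0 ^ (α * (j:ℝ)) := h0.symm
      _ ≤ ∑ i, a i * q i ^ (α * (j:ℝ)) :=
        Finset.single_le_sum (f := fun i => a i * q i ^ (α * (j:ℝ)))
          (fun i _ => mul_nonneg (ha i) (Real.rpow_nonneg (hqn i) _)) (Finset.mem_univ 0)
  have hhigh_fac : ∀ j : ℕ, (∑ i, a i * q i ^ (α * (j:ℝ))) ≤ ∑ i, a i := fun j => by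
    apply Finset.sum_le_sum
    intro i _
    have h1 : q i ^ (α * (j:ℝ)) ≤ 1 :=
      Real.rpow_le_one (hqn i) (hq1 i) (mul_nonneg hα.le (Nat.cast_nonneg j))
    calc a i * q i ^ (α * (j:ℝ)) ≤ a i * 1 := mul_le_mul_of_nonneg_left h1 (ha i)
      _ = a i := mul_one _
  have hup_sum : Summable (fun m : ℕ => ((∑ i, a i) * x ^ α) ^ m / Real.Gamma (α * m + 1)) :=
    ml_summable α hα _ (mul_nonneg hsa hxα)
  have hlo_sum : Summable (fun m : ℕ => (a 0 * x ^ α) ^ m / Real.Gamma (α * m + 1)) :=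
    ml_summable α hα _ (mul_nonneg (ha 0) hxα)
  -- termwise inequalities
  have hterm_lo : ∀ m : ℕ, (a 0 * x ^ α) ^ m / Real.Gamma (α * m + 1) ≤
      x ^ (α * (m:ℝ)) / Real.Gamma (α * m + 1) * ∏ j ∈ Finset.range m, ∑ i, a i * q i ^ (α * j) := by
    intro m
    have hprod : a 0 ^ m ≤ ∏ j ∈ Finset.range m, ∑ i, a i * q i ^ (α * (j:ℝ)) := by
      calc a 0 ^ m = ∏ _j ∈ Finset.range m, a 0 := by
            rw [Finset.prod_const, Finset.card_range]
        _ ≤ _ := Finset.prod_le_prod (fun j _ => ha 0) (fun j _ => hlow_fac j)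
    have heq : (a 0 * x ^ α) ^ m / Real.Gamma (α * m + 1) =
        x ^ (α * (m:ℝ)) / Real.Gamma (α * m + 1) * a 0 ^ m := by
      rw [mul_pow, hxm m]; ring
    rw [heq]
    exact mul_le_mul_of_nonneg_left hprod (div_nonneg (by rw [hxm m]; positivity) (hΓpos m).le)
  have hterm_hi : ∀ m : ℕ, x ^ (α * (m:ℝ)) / Real.Gamma (α * m + 1) *
      ∏ j ∈ Finset.range m, ∑ i, a i * q i ^ (α * j) ≤
      ((∑ i, a i) * x ^ α) ^ m / Real.Gamma (α * m + 1) := by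
    intro m
    have hprod : (∏ j ∈ Finset.range m, ∑ i, a i * q i ^ (α * (j:ℝ))) ≤ (∑ i, a i) ^ m := by
      calc (∏ j ∈ Finset.range m, ∑ i, a i * q i ^ (α * (j:ℝ)))
          ≤ ∏ _j ∈ Finset.range m, ∑ i, a i :=
            Finset.prod_le_prod (fun j _ => hfac_nonneg j) (fun j _ => hhigh_fac j)
        _ = (∑ i, a i) ^ m := by rw [Finset.prod_const, Finset.card_range]
    have heq : ((∑ i, a i) * x ^ α) ^ m / Real.Gamma (α * m + 1) =
        x ^ (α * (m:ℝ)) / Real.Gamma (α * m + 1) * (∑ i, a i) ^ m := by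
      rw [mul_pow, hxm m]; ring
    rw [heq]
    exact mul_le_mul_of_nonneg_left hprod (div_nonneg (by rw [hxm m]; positivity) (hΓpos m).le)
  have hmid_nonneg : ∀ m : ℕ, (0:ℝ) ≤ x ^ (α * (m:ℝ)) / Real.Gamma (α * m + 1) *
      ∏ j ∈ Finset.range m, ∑ i, a i * q i ^ (α * j) := fun m =>
    mul_nonneg (div_nonneg (by rw [hxm m]; positivity) (hΓpos m).le)
      (Finset.prod_nonneg fun j _ => hfac_nonneg j)
  have hmid_sum : Summable (fun m : ℕ => x ^ (α * (m:ℝ)) / Real.Gamma (α * m + 1) *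
      ∏ j ∈ Finset.range m, ∑ i, a i * q i ^ (α * j)) :=
    Summable.of_nonneg_of_le hmid_nonneg hterm_hi hup_sum
  exact ⟨Summable.tsum_le_tsum hterm_lo hlo_sum hmid_sum, Summable.tsum_le_tsum hterm_hi hmid_sum hup_sum⟩
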